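/- For any n ∈ ℕ and any real coefficients α_R indexed by dyadic rectangles R ⊆ [0,1)² with |R| = 2^{-n}, the supremum norm of Σ_{|R|=2^{-n}} α_R h_R on [0,1)² is at least 2^{-n} Σ_{|R|=2^{-n}} |α_R|. -/

import Mathlib

open Finset

/-- The L^∞-normalized Haar function of the dyadic interval `[m/2^k, (m+1)/2^k)`:
`-1` on the left half, `+1` on the right half, `0` outside. -/
noncomputable def haar (k m : ℕ) (x : ℝ) : ℝ :=
  if (m : ℝ) / 2 ^ k ≤ x ∧ x < ((m : ℝ) + 1) / 2 ^ k then
    (if x < (2 * (m : ℝ) + 1) / 2 ^ (k + 1) then -1 else 1)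
  else 0

/-- The Haar function of the dyadic rectangle `[m₁/2^k₁,(m₁+1)/2^k₁) × [m₂/2^k₂,(m₂+1)/2^k₂)`. -/
noncomputable def haar2 (k₁ m₁ k₂ m₂ : ℕ) (p : ℝ × ℝ) : ℝ :=
  haar k₁ m₁ p.1 * haar k₂ m₂ p.2

/-- The hyperbolic Haar sum `∑_{|R| = 2^{-n}} α_R h_R` over dyadic rectangles of area `2^{-n}`. -/
noncomputable def sbSum (n : ℕ) (α : ℕ → ℕ → ℕ → ℝ) (p : ℝ × ℝ) : ℝ :=
  ∑ k ∈ Finset.range (n + 1), ∑ m₁ ∈ Finset.range (2 ^ k),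
    ∑ m₂ ∈ Finset.range (2 ^ (n - k)), α k m₁ m₂ * haar2 k m₁ (n - k) m₂ p

/-- The unit square `[0,1)²`. -/
def unitSq : Set (ℝ × ℝ) := Set.Ico (0 : ℝ) 1 ×ˢ Set.Ico (0 : ℝ) 1



/-! ### Auxiliary machinery (Temlyakov's Riesz-product argument, discretized) -/

/-- sign factor from bit `s` of `i` -/
noncomputable def hbit (s i : ℕ) : ℝ := if i / 2^s % 2 = 0 then -1 else 1

lemma xor_pow_div {t s : ℕ} (i : ℕ) (h : t < s) : (i ^^^ 2^t) / 2^s = i / 2^s := by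
  rw [← Nat.shiftRight_eq_div_pow, ← Nat.shiftRight_eq_div_pow]
  apply Nat.eq_of_testBit_eq
  intro b
  have ht : t ≠ s + b := by omega
  simp [Nat.testBit_shiftRight, Nat.testBit_xor, Nat.testBit_two_pow, ht]

lemma hbit_high {t s : ℕ} (i : ℕ) (h : t < s) : hbit s (i ^^^ 2^t) = hbit s i := by
  unfold hbit; rw [xor_pow_div i h]

lemma hbit_flip (t i : ℕ) : hbit t (i ^^^ 2^t) = - hbit t i := by
  have h1 : (i ^^^ 2^t).testBit t = !(i.testBit t) := by
    simp [Nat.testBit_xor]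
  rw [Nat.testBit_eq_decide_div_mod_eq, Nat.testBit_eq_decide_div_mod_eq] at h1
  unfold hbit
  rcases Nat.mod_two_eq_zero_or_one ((i ^^^ 2^t) / 2^t) with h|h <;>
    rcases Nat.mod_two_eq_zero_or_one (i / 2^t) with h'|h' <;>
      simp [h, h'] at h1 ⊢ <;> norm_num

lemma hbit_sq (s i : ℕ) : hbit s i * hbit s i = 1 := by
  unfold hbit; split_ifs <;> norm_num

lemma hbit_pm (s i : ℕ) : hbit s i = 1 ∨ hbit s i = -1 := by
  unfold hbit; split_ifs <;> simp

lemma flip_sum {M t : ℕ} (ht : t < M) (f : ℕ → ℝ) (hf : ∀ i, f (i ^^^ 2^t) = - f i) :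
    ∑ i ∈ Finset.range (2^M), f i = 0 := by
  have h2 : (2:ℕ)^t < 2^M := Nat.pow_lt_pow_right (by norm_num) ht
  have key : ∑ i ∈ Finset.range (2^M), f i = ∑ i ∈ Finset.range (2^M), f (i ^^^ 2^t) := by
    apply Finset.sum_nbij' (fun i => i ^^^ 2^t) (fun i => i ^^^ 2^t)
    · intro a ha; simp only [Finset.mem_range] at *; exact Nat.xor_lt_two_pow ha h2
    · intro a ha; simp only [Finset.mem_range] at *; exact Nat.xor_lt_two_pow ha h2
    · intro a _; simp [xor_cancel_right]
    · intro a _; simp [xor_cancel_right]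
    · intro a _; rw [xor_cancel_right]
  have h3 : ∑ i ∈ Finset.range (2^M), f i = - ∑ i ∈ Finset.range (2^M), f i := by
    nth_rewrite 1 [key]
    rw [← Finset.sum_neg_distrib]
    exact Finset.sum_congr rfl (fun i _ => hf i)
  linarith

lemma sum_div_const (a : ℕ) (f : ℕ → ℝ) (b : ℕ) :
    ∑ i ∈ Finset.range (a * b), f (i / a) = a * ∑ m ∈ Finset.range b, f m := by
  rcases Nat.eq_zero_or_pos a with rfl | ha
  · simp
  induction b with
  | zero => simp
  | succ b ih =>
    have h1 : a * b ≤ a * (b+1) := by nlinarith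
    rw [Finset.range_eq_Ico, ← Finset.sum_Ico_consecutive _ (Nat.zero_le (a*b)) h1,
      ← Finset.range_eq_Ico, ih, Finset.sum_range_succ]
    have h2 : ∑ i ∈ Finset.Ico (a*b) (a*(b+1)), f (i / a) = ∑ i ∈ Finset.Ico (a*b) (a*(b+1)), f b := by
      apply Finset.sum_congr rfl
      intro i hi
      simp only [Finset.mem_Ico] at hi
      congr 1
      exact Nat.div_eq_of_lt_le (by nlinarith [hi.1]) (by nlinarith [hi.2])
    rw [h2, Finset.sum_const, Nat.card_Ico]
    have h3 : a * (b+1) - a * b = a := by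
      have h4 : a * (b+1) = a * b + a := by ring
      omega
    rw [h3]
    push_cast
    ring

lemma haar_eval (k s i m : ℕ) :
    haar k m ((i : ℝ) / 2^(k+s+1)) = if i / 2^(s+1) = m then hbit s i else 0 := by
  have p1 : (0:ℝ) < 2^k := by positivity
  have pN : (0:ℝ) < 2^(k+s+1) := by positivity
  have pk1 : (0:ℝ) < 2^(k+1) := by positivity
  have e1 : ((2:ℝ))^(k+s+1) = 2^(s+1) * 2^k := by rw [← pow_add]; congr 1; omega
  have e2 : ((2:ℝ))^(k+s+1) = 2^s * 2^(k+1) := by rw [← pow_add]; congr 1; omega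
  have h1 : ((m:ℝ)/2^k ≤ (i:ℝ)/2^(k+s+1)) ↔ (m * 2^(s+1) ≤ i) := by
    rw [div_le_div_iff₀ p1 pN, e1, ← mul_assoc, mul_le_mul_iff_left₀ p1]
    norm_cast
  have h2 : ((i:ℝ)/2^(k+s+1) < ((m:ℝ)+1)/2^k) ↔ (i < (m+1) * 2^(s+1)) := by
    rw [div_lt_div_iff₀ pN p1, e1, ← mul_assoc, mul_lt_mul_iff_left₀ p1]
    norm_cast
  have h3 : ((i:ℝ)/2^(k+s+1) < (2*(m:ℝ)+1)/2^(k+1)) ↔ (i < (2*m+1) * 2^s) := by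
    rw [div_lt_div_iff₀ pN pk1, e2, ← mul_assoc, mul_lt_mul_iff_left₀ pk1]
    norm_cast
  have hchar : i / 2^(s+1) = m ↔ (m * 2^(s+1) ≤ i ∧ i < (m+1) * 2^(s+1)) := by
    rw [← Nat.le_div_iff_mul_le (Nat.two_pow_pos _), ← Nat.div_lt_iff_lt_mul (Nat.two_pow_pos _)]
    omega
  unfold haar
  simp only [h1, h2, h3]
  by_cases hd : i / 2^(s+1) = m
  · obtain ⟨hb1, hb2⟩ := hchar.mp hd
    rw [if_pos ⟨hb1, hb2⟩, if_pos hd]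
    have ea : m * 2^(s+1) = 2*m*2^s := by rw [pow_succ]; ring
    have eb : (m+1) * 2^(s+1) = (2*m+2)*2^s := by rw [pow_succ]; ring
    have hq1 : 2*m ≤ i / 2^s := (Nat.le_div_iff_mul_le (Nat.two_pow_pos _)).2 (ea ▸ hb1)
    have hq2 : i / 2^s < 2*m+2 := (Nat.div_lt_iff_lt_mul (Nat.two_pow_pos _)).2 (eb ▸ hb2)
    have hsig : i < (2*m+1) * 2^s ↔ i / 2^s % 2 = 0 := by
      rw [← Nat.div_lt_iff_lt_mul (Nat.two_pow_pos _)]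
      omega
    unfold hbit
    simp only [hsig]
  · rw [if_neg (fun hc => hd (hchar.mpr hc)), if_neg hd]

noncomputable def cS (n : ℕ) (α : ℕ → ℕ → ℕ → ℝ) (k i j : ℕ) : ℝ :=
  α k (i / 2^(n-k+1)) (j / 2^(k+1))


lemma sbSum_grid (n : ℕ) (α : ℕ → ℕ → ℕ → ℝ) (i j : ℕ) (hi : i < 2^(n+1)) (hj : j < 2^(n+1)) :
    sbSum n α ((i:ℝ)/2^(n+1), (j:ℝ)/2^(n+1)) =
      ∑ k ∈ Finset.range (n+1), cS n α k i j * hbit (n-k) i * hbit k j := by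
  unfold sbSum
  apply Finset.sum_congr rfl
  intro k hk
  rw [Finset.mem_range] at hk
  have ex1 : k + (n-k) + 1 = n + 1 := by omega
  have ex2 : (n-k) + k + 1 = n + 1 := by omega
  have hx : ∀ m₁, haar k m₁ ((i:ℝ)/2^(n+1)) = if i / 2^(n-k+1) = m₁ then hbit (n-k) i else 0 := by
    intro m₁; rw [← ex1]; exact haar_eval k (n-k) i m₁
  have hy : ∀ m₂, haar (n-k) m₂ ((j:ℝ)/2^(n+1)) = if j / 2^(k+1) = m₂ then hbit k j else 0 := by
    intro m₂; rw [← ex2]; exact haar_eval (n-k) k j m₂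
  have hm1 : i / 2^(n-k+1) < 2^k := by
    rw [Nat.div_lt_iff_lt_mul (Nat.two_pow_pos _)]
    calc i < 2^(n+1) := hi
    _ = 2^k * 2^(n-k+1) := by rw [← pow_add]; congr 1; omega
  have hm2 : j / 2^(k+1) < 2^(n-k) := by
    rw [Nat.div_lt_iff_lt_mul (Nat.two_pow_pos _)]
    calc j < 2^(n+1) := hj
    _ = 2^(n-k) * 2^(k+1) := by rw [← pow_add]; congr 1; omega
  unfold haar2
  simp only [hx, hy, mul_ite, ite_mul, mul_zero, zero_mul, Finset.sum_ite_eq,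
    Finset.mem_range, hm1, hm2, if_true]
  unfold cS
  ring

noncomputable def rS (n : ℕ) (α : ℕ → ℕ → ℕ → ℝ) (k i j : ℕ) : ℝ :=
  (if cS n α k i j < 0 then -1 else 1) * hbit (n-k) i * hbit k j

variable (n : ℕ) (α : ℕ → ℕ → ℕ → ℝ)

lemma cS_inv_i {t k : ℕ} (ht : t < n-k+1) (i j : ℕ) :
    cS n α k (i ^^^ 2^t) j = cS n α k i j := by
  unfold cS; rw [xor_pow_div i ht]

lemma cS_inv_j {t k : ℕ} (ht : t < k+1) (i j : ℕ) :
    cS n α k i (j ^^^ 2^t) = cS n α k i j := by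
  unfold cS; rw [xor_pow_div j ht]

lemma rS_inv_i {t k : ℕ} (ht : t < n-k) (i j : ℕ) :
    rS n α k (i ^^^ 2^t) j = rS n α k i j := by
  unfold rS; rw [cS_inv_i n α (by omega), hbit_high i ht]

lemma rS_inv_j {t k : ℕ} (ht : t < k) (i j : ℕ) :
    rS n α k i (j ^^^ 2^t) = rS n α k i j := by
  unfold rS; rw [cS_inv_j n α (by omega), hbit_high j ht]

lemma rS_flip_i (k i j : ℕ) : rS n α k (i ^^^ 2^(n-k)) j = - rS n α k i j := by
  unfold rS; rw [cS_inv_i n α (by omega), hbit_flip]; ring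

lemma rS_flip_j (k i j : ℕ) : rS n α k i (j ^^^ 2^k) = - rS n α k i j := by
  unfold rS; rw [cS_inv_j n α (by omega), hbit_flip]; ring

lemma peel_i : ∀ (b a : ℕ), b ≤ n+1 →
    ∀ G : ℕ → ℕ → ℝ, (∀ t i j, t + a ≤ n → G (i ^^^ 2^t) j = G i j) →
    (∑ i ∈ Finset.range (2^(n+1)), ∑ j ∈ Finset.range (2^(n+1)),
        (∏ l ∈ Finset.Ico a b, (1 + rS n α l i j)) * G i j)
     = ∑ i ∈ Finset.range (2^(n+1)), ∑ j ∈ Finset.range (2^(n+1)), G i j := by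
  intro b
  induction b with
  | zero => intro a _ G _; simp
  | succ b ih =>
    intro a hb G hG
    rcases Nat.lt_or_ge b a with h | h
    · have he : Finset.Ico a (b+1) = ∅ := by apply Finset.Ico_eq_empty; omega
      simp [he]
    · have e1 : (∑ i ∈ Finset.range (2^(n+1)), ∑ j ∈ Finset.range (2^(n+1)),
          (∏ l ∈ Finset.Ico a (b+1), (1 + rS n α l i j)) * G i j)
        = (∑ i ∈ Finset.range (2^(n+1)), ∑ j ∈ Finset.range (2^(n+1)),
            (∏ l ∈ Finset.Ico a b, (1 + rS n α l i j)) * G i j)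
          + (∑ i ∈ Finset.range (2^(n+1)), ∑ j ∈ Finset.range (2^(n+1)),
            (∏ l ∈ Finset.Ico a b, (1 + rS n α l i j)) * (rS n α b i j * G i j)) := by
        rw [← Finset.sum_add_distrib]
        apply Finset.sum_congr rfl; intro i _
        rw [← Finset.sum_add_distrib]
        apply Finset.sum_congr rfl; intro j _
        rw [Finset.prod_Ico_succ_top h]; ring
      have e2 : (∑ i ∈ Finset.range (2^(n+1)), ∑ j ∈ Finset.range (2^(n+1)),
            (∏ l ∈ Finset.Ico a b, (1 + rS n α l i j)) * (rS n α b i j * G i j)) = 0 := by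
        apply flip_sum (t := n - b) (by omega)
        intro i
        rw [← Finset.sum_neg_distrib]
        apply Finset.sum_congr rfl
        intro j _
        have hP : ∀ l ∈ Finset.Ico a b, (1 + rS n α l (i ^^^ 2^(n-b)) j) = (1 + rS n α l i j) := by
          intro l hl; rw [Finset.mem_Ico] at hl
          rw [rS_inv_i n α (by omega)]
        have hrb : rS n α b (i ^^^ 2^(n-b)) j = - rS n α b i j := rS_flip_i n α b i j
        rw [Finset.prod_congr rfl hP, hrb, hG (n-b) i j (by omega)]
        ring
      rw [e1, ih a (by omega) G hG, e2, add_zero]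

lemma peel_j : ∀ (d a : ℕ), a + d ≤ n+1 →
    ∀ G : ℕ → ℕ → ℝ, (∀ t i j, a ≤ t → t < a + d → G i (j ^^^ 2^t) = G i j) →
    (∑ i ∈ Finset.range (2^(n+1)), ∑ j ∈ Finset.range (2^(n+1)),
        (∏ l ∈ Finset.Ico a (a+d), (1 + rS n α l i j)) * G i j)
     = ∑ i ∈ Finset.range (2^(n+1)), ∑ j ∈ Finset.range (2^(n+1)), G i j := by
  intro d
  induction d with
  | zero => intro a _ G _; simp
  | succ d ih =>
    intro a hd G hG
    have hlt : a < a + (d+1) := by omega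
    have e1 : (∑ i ∈ Finset.range (2^(n+1)), ∑ j ∈ Finset.range (2^(n+1)),
          (∏ l ∈ Finset.Ico a (a+(d+1)), (1 + rS n α l i j)) * G i j)
        = (∑ i ∈ Finset.range (2^(n+1)), ∑ j ∈ Finset.range (2^(n+1)),
            (∏ l ∈ Finset.Ico (a+1) ((a+1)+d), (1 + rS n α l i j)) * G i j)
          + (∑ i ∈ Finset.range (2^(n+1)), ∑ j ∈ Finset.range (2^(n+1)),
            rS n α a i j * ((∏ l ∈ Finset.Ico (a+1) ((a+1)+d), (1 + rS n α l i j)) * G i j)) := by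
      rw [← Finset.sum_add_distrib]
      apply Finset.sum_congr rfl; intro i _
      rw [← Finset.sum_add_distrib]
      apply Finset.sum_congr rfl; intro j _
      rw [Finset.prod_eq_prod_Ico_succ_bot hlt]
      have : a + (d+1) = (a+1) + d := by omega
      rw [this]; ring
    have e2 : (∑ i ∈ Finset.range (2^(n+1)), ∑ j ∈ Finset.range (2^(n+1)),
            rS n α a i j * ((∏ l ∈ Finset.Ico (a+1) ((a+1)+d), (1 + rS n α l i j)) * G i j)) = 0 := by
      apply Finset.sum_eq_zero
      intro i _
      apply flip_sum (t := a) (by omega)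
      intro j
      have hP : ∀ l ∈ Finset.Ico (a+1) ((a+1)+d), (1 + rS n α l i (j ^^^ 2^a)) = (1 + rS n α l i j) := by
        intro l hl; rw [Finset.mem_Ico] at hl
        rw [rS_inv_j n α (by omega)]
      rw [Finset.prod_congr rfl hP, rS_flip_j, hG a i j (le_refl a) (by omega)]
      ring
    rw [e1, e2, add_zero]
    exact ih (a+1) (by omega) G (fun t i j h1 h2 => hG t i j (by omega) (by omega))

lemma rS_pm (k i j : ℕ) : rS n α k i j = 1 ∨ rS n α k i j = -1 := by
  unfold rS
  rcases hbit_pm (n-k) i with h1|h1 <;> rcases hbit_pm k j with h2|h2 <;>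
    rw [h1, h2] <;> split_ifs <;> norm_num

lemma claimA : ∑ i ∈ Finset.range (2^(n+1)), ∑ j ∈ Finset.range (2^(n+1)),
    (∏ l ∈ Finset.Ico 0 (n+1), (1 + rS n α l i j)) = ((2:ℝ)^(n+1)) * 2^(n+1) := by
  have h := peel_i n α (n+1) 0 (le_refl _) (fun _ _ => 1) (fun _ _ _ _ => rfl)
  simp only [mul_one] at h
  rw [h]
  simp [Finset.sum_const, Finset.card_range]

lemma claimB (k : ℕ) (hk : k ≤ n) :
    ∑ i ∈ Finset.range (2^(n+1)), ∑ j ∈ Finset.range (2^(n+1)),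
      (∏ l ∈ Finset.Ico 0 (n+1), (1 + rS n α l i j)) * (cS n α k i j * hbit (n-k) i * hbit k j)
    = ((2:ℝ)^(n+2)) * ∑ m₁ ∈ Finset.range (2^k), ∑ m₂ ∈ Finset.range (2^(n-k)), |α k m₁ m₂| := by
  -- Step 1: strip the top factors (levels k+1..n) via i-bit flips
  have step1 : ∑ i ∈ Finset.range (2^(n+1)), ∑ j ∈ Finset.range (2^(n+1)),
      (∏ l ∈ Finset.Ico 0 (n+1), (1 + rS n α l i j)) * (cS n α k i j * hbit (n-k) i * hbit k j)
    = ∑ i ∈ Finset.range (2^(n+1)), ∑ j ∈ Finset.range (2^(n+1)),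
      (∏ l ∈ Finset.Ico 0 (k+1), (1 + rS n α l i j)) * (cS n α k i j * hbit (n-k) i * hbit k j) := by
    have hsplit : ∀ i j, (∏ l ∈ Finset.Ico 0 (n+1), (1 + rS n α l i j))
        = (∏ l ∈ Finset.Ico 0 (k+1), (1 + rS n α l i j)) * ∏ l ∈ Finset.Ico (k+1) (n+1), (1 + rS n α l i j) := by
      intro i j; rw [Finset.prod_Ico_consecutive _ (by omega) (by omega)]
    have e : ∑ i ∈ Finset.range (2^(n+1)), ∑ j ∈ Finset.range (2^(n+1)),
        (∏ l ∈ Finset.Ico 0 (n+1), (1 + rS n α l i j)) * (cS n α k i j * hbit (n-k) i * hbit k j)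
      = ∑ i ∈ Finset.range (2^(n+1)), ∑ j ∈ Finset.range (2^(n+1)),
        (∏ l ∈ Finset.Ico (k+1) (n+1), (1 + rS n α l i j)) *
          ((fun i j => (∏ l ∈ Finset.Ico 0 (k+1), (1 + rS n α l i j)) * (cS n α k i j * hbit (n-k) i * hbit k j)) i j) := by
      apply Finset.sum_congr rfl; intro i _
      apply Finset.sum_congr rfl; intro j _
      rw [hsplit]; ring
    rw [e, peel_i n α (n+1) (k+1) (le_refl _)]
    intro t i j ht
    have h1 : ∀ l ∈ Finset.Ico 0 (k+1), (1 + rS n α l (i ^^^ 2^t) j) = (1 + rS n α l i j) := by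
      intro l hl; rw [Finset.mem_Ico] at hl
      rw [rS_inv_i n α (by omega)]
    rw [Finset.prod_congr rfl h1, cS_inv_i n α (by omega), hbit_high i (by omega)]
  rw [step1]
  -- Step 2: split off the level-k factor
  have step2 : ∑ i ∈ Finset.range (2^(n+1)), ∑ j ∈ Finset.range (2^(n+1)),
      (∏ l ∈ Finset.Ico 0 (k+1), (1 + rS n α l i j)) * (cS n α k i j * hbit (n-k) i * hbit k j)
    = (∑ i ∈ Finset.range (2^(n+1)), ∑ j ∈ Finset.range (2^(n+1)),
        (∏ l ∈ Finset.Ico 0 k, (1 + rS n α l i j)) * (cS n α k i j * hbit (n-k) i * hbit k j))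
      + ∑ i ∈ Finset.range (2^(n+1)), ∑ j ∈ Finset.range (2^(n+1)),
        (∏ l ∈ Finset.Ico 0 k, (1 + rS n α l i j)) * (rS n α k i j * (cS n α k i j * hbit (n-k) i * hbit k j)) := by
    rw [← Finset.sum_add_distrib]
    apply Finset.sum_congr rfl; intro i _
    rw [← Finset.sum_add_distrib]
    apply Finset.sum_congr rfl; intro j _
    rw [Finset.prod_Ico_succ_top (by omega)]
    ring
  rw [step2]
  -- the first piece vanishes
  have z1 : (∑ i ∈ Finset.range (2^(n+1)), ∑ j ∈ Finset.range (2^(n+1)),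
        (∏ l ∈ Finset.Ico 0 k, (1 + rS n α l i j)) * (cS n α k i j * hbit (n-k) i * hbit k j)) = 0 := by
    apply flip_sum (t := n-k) (by omega)
    intro i
    rw [← Finset.sum_neg_distrib]
    apply Finset.sum_congr rfl; intro j _
    have h1 : ∀ l ∈ Finset.Ico 0 k, (1 + rS n α l (i ^^^ 2^(n-k)) j) = (1 + rS n α l i j) := by
      intro l hl; rw [Finset.mem_Ico] at hl
      rw [rS_inv_i n α (by omega)]
    rw [Finset.prod_congr rfl h1, cS_inv_i n α (by omega), hbit_flip]
    ring
  rw [z1, zero_add]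
  -- the second piece: rS k * (cS k * hbits) = |cS k|
  have hpoint : ∀ i j, rS n α k i j * (cS n α k i j * hbit (n-k) i * hbit k j) = |cS n α k i j| := by
    intro i j
    unfold rS
    have hu := hbit_sq (n-k) i
    have hv := hbit_sq k j
    set c := cS n α k i j with hc
    set u := hbit (n-k) i
    set v := hbit k j
    rcases lt_or_ge c 0 with h|h
    · rw [if_pos h, abs_of_neg h]
      linear_combination (-c*v*v) * hu + (-c) * hv
    · rw [if_neg (not_lt.mpr h), abs_of_nonneg h]
      linear_combination (c*v*v) * hu + c * hv
  have e2 : ∑ i ∈ Finset.range (2^(n+1)), ∑ j ∈ Finset.range (2^(n+1)),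
        (∏ l ∈ Finset.Ico 0 k, (1 + rS n α l i j)) * (rS n α k i j * (cS n α k i j * hbit (n-k) i * hbit k j))
      = ∑ i ∈ Finset.range (2^(n+1)), ∑ j ∈ Finset.range (2^(n+1)),
        (∏ l ∈ Finset.Ico 0 k, (1 + rS n α l i j)) * ((fun i j => |cS n α k i j|) i j) := by
    apply Finset.sum_congr rfl; intro i _
    apply Finset.sum_congr rfl; intro j _
    rw [hpoint]
  rw [e2]
  -- strip remaining factors via j-bit flips
  have step3 := peel_j n α k 0 (by omega) (fun i j => |cS n α k i j|)
    (fun t i j _ ht => by rw [cS_inv_j n α (by omega)])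
  rw [show Finset.Ico 0 (0+k) = Finset.Ico 0 k by norm_num] at step3
  rw [step3]
  -- compute the plain double sum
  have hy : ∀ i, ∑ j ∈ Finset.range (2^(n+1)), |cS n α k i j|
      = (2^(k+1) : ℝ) * ∑ m₂ ∈ Finset.range (2^(n-k)), |α k (i / 2^(n-k+1)) m₂| := by
    intro i
    have hr : (2:ℕ)^(n+1) = 2^(k+1) * 2^(n-k) := by rw [← pow_add]; congr 1; omega
    rw [hr]
    simp only [cS]
    exact_mod_cast sum_div_const (2^(k+1)) (fun m₂ => |α k (i / 2^(n-k+1)) m₂|) (2^(n-k))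
  have hx : ∑ i ∈ Finset.range (2^(n+1)), ∑ j ∈ Finset.range (2^(n+1)), |cS n α k i j|
      = (2^(k+1) : ℝ) * ((2^(n-k+1):ℝ) * ∑ m₁ ∈ Finset.range (2^k), ∑ m₂ ∈ Finset.range (2^(n-k)), |α k m₁ m₂|) := by
    rw [Finset.sum_congr rfl (fun i _ => hy i), ← Finset.mul_sum]
    congr 1
    have hr : (2:ℕ)^(n+1) = 2^(n-k+1) * 2^k := by rw [← pow_add]; congr 1; omega
    rw [hr]
    exact_mod_cast sum_div_const (2^(n-k+1)) (fun m₁ => ∑ m₂ ∈ Finset.range (2^(n-k)), |α k m₁ m₂|) (2^k)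
  rw [hx, ← mul_assoc]
  congr 1
  push_cast
  rw [← pow_add]
  congr 1
  omega

lemma haar_abs_le (k m : ℕ) (x : ℝ) : |haar k m x| ≤ 1 := by
  unfold haar; split_ifs <;> norm_num

lemma sbSum_bound (n : ℕ) (α : ℕ → ℕ → ℕ → ℝ) (p : ℝ × ℝ) :
    |sbSum n α p| ≤ ∑ k ∈ Finset.range (n+1), ∑ m₁ ∈ Finset.range (2^k),
      ∑ m₂ ∈ Finset.range (2^(n-k)), |α k m₁ m₂| := by
  unfold sbSum
  refine le_trans (Finset.abs_sum_le_sum_abs _ _) (Finset.sum_le_sum ?_)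
  intro k _
  refine le_trans (Finset.abs_sum_le_sum_abs _ _) (Finset.sum_le_sum ?_)
  intro m₁ _
  refine le_trans (Finset.abs_sum_le_sum_abs _ _) (Finset.sum_le_sum ?_)
  intro m₂ _
  rw [abs_mul]
  unfold haar2
  rw [abs_mul]
  calc |α k m₁ m₂| * (|haar k m₁ p.1| * |haar (n-k) m₂ p.2|) ≤ |α k m₁ m₂| * (1 * 1) := by
        apply mul_le_mul_of_nonneg_left _ (abs_nonneg _)
        exact mul_le_mul (haar_abs_le _ _ _) (haar_abs_le _ _ _) (abs_nonneg _) zero_le_one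
    _ = |α k m₁ m₂| := by ring


/-- The two-dimensional small ball inequality with general coefficients. -/
theorem small_ball_inequality_2d (n : ℕ) (α : ℕ → ℕ → ℕ → ℝ) :
    sSup ((fun p => |sbSum n α p|) '' unitSq) ≥
      ((2 : ℝ) ^ n)⁻¹ * ∑ k ∈ Finset.range (n + 1), ∑ m₁ ∈ Finset.range (2 ^ k),
        ∑ m₂ ∈ Finset.range (2 ^ (n - k)), |α k m₁ m₂| := by
  set S : ℝ := ∑ k ∈ Finset.range (n + 1), ∑ m₁ ∈ Finset.range (2 ^ k),
        ∑ m₂ ∈ Finset.range (2 ^ (n - k)), |α k m₁ m₂| with hS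
  set q : ℝ := ((2 : ℝ) ^ n)⁻¹ * S with hq
  set T : Finset ℕ := Finset.range (2^(n+1)) with hT
  set Ψ : ℕ × ℕ → ℝ := fun p => ∏ l ∈ Finset.Ico 0 (n+1), (1 + rS n α l p.1 p.2) with hΨ
  set F : ℕ × ℕ → ℝ := fun p => ∑ k ∈ Finset.range (n+1), cS n α k p.1 p.2 * hbit (n-k) p.1 * hbit k p.2 with hF
  have hΨ0 : ∀ p : ℕ × ℕ, 0 ≤ Ψ p := by
    intro p
    apply Finset.prod_nonneg
    intro l _
    rcases rS_pm n α l p.1 p.2 with h|h <;> rw [h] <;> norm_num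
  have hsum1 : ∑ p ∈ T ×ˢ T, Ψ p = (2:ℝ)^(n+1) * 2^(n+1) := by
    rw [Finset.sum_product]
    exact claimA n α
  have hsum2 : ∑ p ∈ T ×ˢ T, Ψ p * F p = (2:ℝ)^(n+2) * S := by
    rw [Finset.sum_product]
    have e : ∀ i j, Ψ (i, j) * F (i, j) = ∑ k ∈ Finset.range (n+1),
        (∏ l ∈ Finset.Ico 0 (n+1), (1 + rS n α l i j)) * (cS n α k i j * hbit (n-k) i * hbit k j) := by
      intro i j
      rw [hΨ, hF]
      dsimp only
      rw [Finset.mul_sum]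
    calc ∑ i ∈ T, ∑ j ∈ T, Ψ (i, j) * F (i, j)
        = ∑ i ∈ T, ∑ j ∈ T, ∑ k ∈ Finset.range (n+1),
          (∏ l ∈ Finset.Ico 0 (n+1), (1 + rS n α l i j)) * (cS n α k i j * hbit (n-k) i * hbit k j) := by
          exact Finset.sum_congr rfl (fun i _ => Finset.sum_congr rfl (fun j _ => e i j))
      _ = ∑ i ∈ T, ∑ k ∈ Finset.range (n+1), ∑ j ∈ T,
          (∏ l ∈ Finset.Ico 0 (n+1), (1 + rS n α l i j)) * (cS n α k i j * hbit (n-k) i * hbit k j) :=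
          Finset.sum_congr rfl (fun i _ => Finset.sum_comm)
      _ = ∑ k ∈ Finset.range (n+1), ∑ i ∈ T, ∑ j ∈ T,
          (∏ l ∈ Finset.Ico 0 (n+1), (1 + rS n α l i j)) * (cS n α k i j * hbit (n-k) i * hbit k j) :=
          Finset.sum_comm
      _ = ∑ k ∈ Finset.range (n+1), (2:ℝ)^(n+2) * ∑ m₁ ∈ Finset.range (2^k), ∑ m₂ ∈ Finset.range (2^(n-k)), |α k m₁ m₂| := by
          apply Finset.sum_congr rfl
          intro k hk
          rw [Finset.mem_range] at hk
          exact claimB n α k (by omega)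
      _ = (2:ℝ)^(n+2) * S := by rw [hS, Finset.mul_sum]
  -- existence of a good grid point
  have hexist : ∃ p ∈ T ×ˢ T, q ≤ |F p| := by
    by_contra hcon
    push_neg at hcon
    have hpos : ∃ p ∈ T ×ˢ T, 0 < Ψ p := by
      by_contra hz
      push_neg at hz
      have : ∑ p ∈ T ×ˢ T, Ψ p = 0 := by
        apply Finset.sum_eq_zero
        intro p hp
        exact le_antisymm (hz p hp) (hΨ0 p)
      rw [hsum1] at this
      have h2 : (0:ℝ) < (2:ℝ)^(n+1) * 2^(n+1) := by positivity
      linarith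
    obtain ⟨p₀, hp₀, hΨp₀⟩ := hpos
    have hlt : ∑ p ∈ T ×ˢ T, Ψ p * F p < ∑ p ∈ T ×ˢ T, Ψ p * q := by
      apply Finset.sum_lt_sum
      · intro p hp
        exact mul_le_mul_of_nonneg_left (le_trans (le_abs_self _) (le_of_lt (hcon p hp))) (hΨ0 p)
      · exact ⟨p₀, hp₀, by
          have := hcon p₀ hp₀
          calc Ψ p₀ * F p₀ ≤ Ψ p₀ * |F p₀| := mul_le_mul_of_nonneg_left (le_abs_self _) (hΨ0 p₀)
            _ < Ψ p₀ * q := mul_lt_mul_of_pos_left this hΨp₀⟩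
    rw [hsum2] at hlt
    have hrhs : ∑ p ∈ T ×ˢ T, Ψ p * q = (2:ℝ)^(n+1) * 2^(n+1) * q := by
      rw [← Finset.sum_mul, hsum1]
    rw [hrhs] at hlt
    have hpow : (2:ℝ)^(n+1) * 2^(n+1) * q = (2:ℝ)^(n+2) * S := by
      rw [hq]
      have h2 : (2:ℝ)^(n+1) * 2^(n+1) = 2^n * 2^(n+2) := by
        rw [← pow_add, ← pow_add]; congr 1; omega
      rw [h2]
      have : ((2:ℝ)^n) ≠ 0 := by positivity
      field_simp
    rw [hpow] at hlt
    exact lt_irrefl _ hlt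
  obtain ⟨⟨i, j⟩, hpmem, hqle⟩ := hexist
  rw [Finset.mem_product, hT, Finset.mem_range, Finset.mem_range] at hpmem
  obtain ⟨hi, hj⟩ := hpmem
  -- the corresponding point in the unit square
  have hpow2 : (0:ℝ) < 2^(n+1) := by positivity
  have hmem : (((i:ℝ)/2^(n+1), (j:ℝ)/2^(n+1)) : ℝ × ℝ) ∈ unitSq := by
    constructor <;> constructor
    · positivity
    · rw [div_lt_one hpow2]; exact_mod_cast hi
    · positivity
    · rw [div_lt_one hpow2]; exact_mod_cast hj
  have hval : |sbSum n α ((i:ℝ)/2^(n+1), (j:ℝ)/2^(n+1))| = |F (i, j)| := by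
    rw [sbSum_grid n α i j hi hj]
  have himg : |F (i, j)| ∈ ((fun p => |sbSum n α p|) '' unitSq) := by
    exact ⟨((i:ℝ)/2^(n+1), (j:ℝ)/2^(n+1)), hmem, hval⟩
  have hbdd : BddAbove ((fun p => |sbSum n α p|) '' unitSq) := by
    refine ⟨S, ?_⟩
    rintro v ⟨p, _, rfl⟩
    exact sbSum_bound n α p
  exact le_trans hqle (le_csSup hbdd himg)
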